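/- Let α be a type and R ⊆ FreeGroup α a set of relators with 1 ∉ R. Let r, s : FreeGroup α satisfy (r ∈ R or r⁻¹ ∈ R) and (s ∈ R or s⁻¹ ∈ R), and suppose s ≠ r⁻¹. Then r can be transformed to s by a finite sequence of elementary moves that never passes through the identity: Relation.ReflTransGen step01_R r s holds. -/

import Mathlib

/-- The elementary-move relation: `z` is obtained from `w` either by a
conjugation move by a generator (or its inverse), or by appending a relator
or an inverse relator on the right. -/
def StepR {α : Type*} (R : Set (FreeGroup α)) (w z : FreeGroup α) : Prop :=
  (∃ a : α, z = FreeGroup.of a * w * (FreeGroup.of a)⁻¹ ∨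
    z = (FreeGroup.of a)⁻¹ * w * FreeGroup.of a) ∨
  (∃ t : FreeGroup α, (t ∈ R ∨ t⁻¹ ∈ R) ∧ z = w * t)

/-- The identity-avoiding elementary-move relation. -/
def Step01R {α : Type*} (R : Set (FreeGroup α)) (w z : FreeGroup α) : Prop :=
  z ≠ 1 ∧ StepR R w z

private lemma conj_ne_one {G : Type*} [Group G] {g w : G} (h : g * w * g⁻¹ = 1) :
    w = 1 := by
  have hw : w = g⁻¹ * (g * w * g⁻¹) * g := by group
  rw [h] at hw
  simpa using hw

private lemma conj_chain {α : Type*} (R : Set (FreeGroup α)) (g : FreeGroup α) :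
    ∀ w : FreeGroup α, w ≠ 1 →
      Relation.ReflTransGen (Step01R R) w (g * w * g⁻¹) := by
  induction g using FreeGroup.induction_on with
  | C1 => intro w hw; simpa using Relation.ReflTransGen.refl
  | of a =>
    intro w hw
    refine Relation.ReflTransGen.single ⟨?_, Or.inl ⟨a, Or.inl rfl⟩⟩
    exact fun h => hw (conj_ne_one h)
  | inv_of a _ =>
    intro w hw
    rw [inv_inv]
    refine Relation.ReflTransGen.single ⟨?_, Or.inl ⟨a, Or.inr rfl⟩⟩
    exact fun h => hw (conj_ne_one (g := (FreeGroup.of a)⁻¹) (by simpa using h))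
  | mul x y hx hy =>
    intro w hw
    have h1 := hy w hw
    have hne : y * w * y⁻¹ ≠ 1 := by
      exact fun h => hw (conj_ne_one h)
    have h2 := hx (y * w * y⁻¹) hne
    have heq : x * (y * w * y⁻¹) * x⁻¹ = x * y * w * (x * y)⁻¹ := by
      group
    rw [heq] at h2
    exact h1.trans h2

/-- If `1 ∉ R`, any relator or inverse relator `r` can be transformed to any
relator or inverse relator `s ≠ r⁻¹` by a finite sequence of elementary moves
avoiding the identity. -/
theorem relator_to_relator {α : Type*} (R : Set (FreeGroup α))
    (h1R : (1 : FreeGroup α) ∉ R) (r s : FreeGroup α)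
    (hr : r ∈ R ∨ r⁻¹ ∈ R) (hs : s ∈ R ∨ s⁻¹ ∈ R) (hsr : s ≠ r⁻¹) :
    Relation.ReflTransGen (Step01R R) r s := by
  have hs1 : s ≠ 1 := by
    rintro rfl
    simp at hs
    exact h1R hs
  have hrs : r * s ≠ 1 := by
    intro h
    exact hsr (inv_eq_of_mul_eq_one_right h).symm
  -- step 1 : r → r * s
  have step1 : Relation.ReflTransGen (Step01R R) r (r * s) :=
    Relation.ReflTransGen.single ⟨hrs, Or.inr ⟨s, hs, rfl⟩⟩
  -- step 2 : r * s → r⁻¹ * (r * s) * r = s * r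
  have step2 := conj_chain R r⁻¹ (r * s) hrs
  have heq : r⁻¹ * (r * s) * r⁻¹⁻¹ = s * r := by group
  rw [heq] at step2
  -- step 3 : s * r → s * r * r⁻¹ = s
  have hrinv : r⁻¹ ∈ R ∨ (r⁻¹)⁻¹ ∈ R := by
    rw [inv_inv]; tauto
  have step3 : Relation.ReflTransGen (Step01R R) (s * r) s := by
    refine Relation.ReflTransGen.single ⟨hs1, Or.inr ⟨r⁻¹, hrinv, ?_⟩⟩
    group
  exact (step1.trans step2).trans step3
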